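/- arXiv:2507.07158 — 3 statements merged into one kernel-verified Lean document; each statement's English description precedes it below -/
import Mathlib

section
/- Equality case of the reverse Cauchy–Schwarz inequality: if X and Y are causal vectors in Minkowski spacetime ℝ^{1+n}, then η(X,Y)² = η(X,X)·η(Y,Y) holds if and only if X and Y are linearly dependent. -/
set_option maxHeartbeats 1600000

noncomputable def minkowski {n : ℕ} (v w : ℝ × EuclideanSpace ℝ (Fin n)) : ℝ :=
  -(v.1 * w.1) + (inner ℝ v.2 w.2 : ℝ)

def IsCausal {n : ℕ} (v : ℝ × EuclideanSpace ℝ (Fin n)) : Prop :=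
  v ≠ 0 ∧ minkowski v v ≤ 0

lemma mink_smul_left {n : ℕ} (c : ℝ) (v w : ℝ × EuclideanSpace ℝ (Fin n)) :
    minkowski (c • v) w = c * minkowski v w := by
  simp only [minkowski, Prod.smul_fst, Prod.smul_snd, smul_eq_mul, real_inner_smul_left]
  ring

lemma mink_smul_right {n : ℕ} (c : ℝ) (v w : ℝ × EuclideanSpace ℝ (Fin n)) :
    minkowski v (c • w) = c * minkowski v w := by
  simp only [minkowski, Prod.smul_fst, Prod.smul_snd, smul_eq_mul, real_inner_smul_right]
  ring

/-- Equality case of the reverse Cauchy–Schwarz inequality: for causal vectors `X`, `Y`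
in Minkowski spacetime, `η(X,Y)² = η(X,X)·η(Y,Y)` iff `X` and `Y` are linearly dependent. -/
theorem reverse_cauchy_schwarz_equality {n : ℕ} (hn : 1 ≤ n)
    (X Y : ℝ × EuclideanSpace ℝ (Fin n)) (hX : IsCausal X) (hY : IsCausal Y) :
    (minkowski X Y) ^ 2 = minkowski X X * minkowski Y Y ↔
      ¬ LinearIndependent ℝ ![X, Y] := by
  obtain ⟨hX0, hXc⟩ := hX
  obtain ⟨hY0, hYc⟩ := hY
  have hb : Y.1 ≠ 0 := by
    intro h
    apply hY0
    have h1 : (inner ℝ Y.2 Y.2 : ℝ) ≤ 0 := by simpa [minkowski, h] using hYc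
    have h2 : Y.2 = 0 := by rwa [real_inner_self_nonpos] at h1
    exact Prod.ext h h2
  constructor
  · -- equality → dependent
    intro heq hLI
    set a := X.1 with hadef
    set b := Y.1 with hbdef
    set u := X.2 with hudef
    set v := Y.2 with hvdef
    set s : ℝ := inner ℝ u v with hsdef
    have hs' : (inner ℝ v u : ℝ) = s := real_inner_comm u v
    have huu : (inner ℝ u u : ℝ) = ‖u‖ ^ 2 := real_inner_self_eq_norm_sq u
    have hvv : (inner ℝ v v : ℝ) = ‖v‖ ^ 2 := real_inner_self_eq_norm_sq v
    have hXc' : ‖u‖ ^ 2 ≤ a ^ 2 := by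
      have := hXc; simp only [minkowski, huu] at this; nlinarith
    have hYc' : ‖v‖ ^ 2 ≤ b ^ 2 := by
      have := hYc; simp only [minkowski, hvv] at this; nlinarith
    have hcs : |s| ≤ ‖u‖ * ‖v‖ := abs_real_inner_le_norm u v
    have hE : ‖a • v - b • u‖ ^ 2 = a ^ 2 * ‖v‖ ^ 2 - 2 * (a * b) * s + b ^ 2 * ‖u‖ ^ 2 := by
      rw [norm_sub_sq_real, norm_smul, norm_smul, real_inner_smul_left,
        real_inner_smul_right, hs']
      simp only [Real.norm_eq_abs, mul_pow, sq_abs]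
      ring
    have heq' : a ^ 2 * ‖v‖ ^ 2 - 2 * (a * b) * s + b ^ 2 * ‖u‖ ^ 2
        = ‖u‖ ^ 2 * ‖v‖ ^ 2 - s ^ 2 := by
      simp only [minkowski, huu, hvv, ← hsdef] at heq
      simp only [show inner ℝ X.2 X.2 = ‖u‖ ^ 2 from huu, show inner ℝ Y.2 Y.2 = ‖v‖ ^ 2 from hvv] at heq
      linear_combination heq
    have hab : a * b * s ≤ |a| * |b| * |s| := by
      calc a * b * s ≤ |a * b * s| := le_abs_self _
        _ = |a| * |b| * |s| := by rw [abs_mul, abs_mul]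
    have ha1 : ‖u‖ ≤ |a| := by nlinarith [norm_nonneg u, abs_nonneg a, sq_abs a]
    have hb1 : ‖v‖ ≤ |b| := by nlinarith [norm_nonneg v, abs_nonneg b, sq_abs b]
    have hp : ‖u‖ * ‖v‖ ≤ |a| * |b| :=
      mul_le_mul ha1 hb1 (norm_nonneg v) (abs_nonneg a)
    have H1 : 2 * ((|a| * |b|) * (‖u‖ * ‖v‖)) ≤ a ^ 2 * ‖v‖ ^ 2 + b ^ 2 * ‖u‖ ^ 2 := by
      nlinarith [sq_nonneg (|a| * ‖v‖ - |b| * ‖u‖), sq_abs a, sq_abs b,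
        sq_nonneg ‖u‖, sq_nonneg ‖v‖]
    have hPs : ‖u‖ * ‖v‖ ≤ |s| := by
      nlinarith [heq', hab, hp, hcs, H1, sq_abs s,
        mul_nonneg (norm_nonneg u) (norm_nonneg v), abs_nonneg s]
    have hPeq : ‖u‖ * ‖v‖ = |s| := le_antisymm hPs hcs
    have key : ‖u‖ ^ 2 * ‖v‖ ^ 2 - s ^ 2 ≤ 0 := by
      have h2 : (‖u‖ * ‖v‖) ^ 2 = s ^ 2 := by rw [hPeq, sq_abs]
      nlinarith [h2]
    have hz : a • v = b • u := by
      have h0 : ‖a • v - b • u‖ ^ 2 ≤ 0 := by rw [hE, heq']; exact key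
      have h1 : ‖a • v - b • u‖ = 0 := by nlinarith [norm_nonneg (a • v - b • u)]
      exact sub_eq_zero.mp (norm_eq_zero.mp h1)
    have hu : u = (a / b) • v := by
      calc u = (1 : ℝ) • u := (one_smul ℝ u).symm
        _ = (b⁻¹ * b) • u := by rw [inv_mul_cancel₀ hb]
        _ = b⁻¹ • (b • u) := mul_smul _ _ _
        _ = b⁻¹ • (a • v) := by rw [hz]
        _ = (b⁻¹ * a) • v := (mul_smul _ _ _).symm
        _ = (a / b) • v := by rw [div_eq_mul_inv, mul_comm]
    have hXY : X = (a / b) • Y := by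
      apply Prod.ext
      · show a = ((a / b) • Y).1
        have h1 : ((a / b) • Y).1 = (a / b) * b := rfl
        rw [h1]; field_simp
      · show u = ((a / b) • Y).2
        exact hu
    have h1 : (1 : ℝ) = 0 :=
      (LinearIndependent.pair_iff.mp hLI 1 (-(a / b)) (by
        rw [one_smul, neg_smul, hXY, add_neg_cancel])).1
    exact one_ne_zero h1
  · -- dependent → equality
    intro hnLI
    rw [LinearIndependent.pair_iff] at hnLI
    push_neg at hnLI
    obtain ⟨p, q, hpq, hne⟩ := hnLI
    have hp0 : p ≠ 0 := by
      rintro rfl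
      rw [zero_smul, zero_add] at hpq
      rcases smul_eq_zero.mp hpq with h' | h'
      · exact hne rfl h'
      · exact hY0 h'
    have hXY : X = (-q / p) • Y := by
      have hx : p • X = (-q) • Y := by
        rw [neg_smul]
        exact eq_neg_of_add_eq_zero_left hpq
      calc X = (1 : ℝ) • X := (one_smul ℝ X).symm
        _ = (p⁻¹ * p) • X := by rw [inv_mul_cancel₀ hp0]
        _ = p⁻¹ • (p • X) := mul_smul _ _ _
        _ = p⁻¹ • ((-q) • Y) := by rw [hx]
        _ = (p⁻¹ * (-q)) • Y := (mul_smul _ _ _).symm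
        _ = (-q / p) • Y := by rw [div_eq_mul_inv, mul_comm]
    rw [hXY]
    simp only [mink_smul_left, mink_smul_right]
    ring
end

section
/- A vector T in Minkowski spacetime ℝ^{1+n} is past-directed timelike if and only if there exists a constant C > 0 such that η(T,X) ≥ C·‖X‖ for every future-directed causal vector X, where ‖X‖ is the Euclidean norm of X. -/
/-- The Euclidean norm on `ℝ^{1+n}`: `‖v‖ = √(v₀² + ‖v'‖²)`. -/
noncomputable def euclNorm {n : ℕ} (v : ℝ × EuclideanSpace ℝ (Fin n)) : ℝ :=
  Real.sqrt (v.1 ^ 2 + ‖v.2‖ ^ 2)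

/-- A vector is timelike if it is nonzero and `η(v,v) < 0`. -/
def IsTimelike {n : ℕ} (v : ℝ × EuclideanSpace ℝ (Fin n)) : Prop :=
  v ≠ 0 ∧ minkowski v v < 0

/-- A causal vector is future-directed if its time component is positive. -/
def IsFutureCausal {n : ℕ} (v : ℝ × EuclideanSpace ℝ (Fin n)) : Prop :=
  IsCausal v ∧ 0 < v.1

/-- A timelike vector is past-directed if its time component is negative. -/
def IsPastTimelike {n : ℕ} (v : ℝ × EuclideanSpace ℝ (Fin n)) : Prop :=
  IsTimelike v ∧ v.1 < 0

/-- A vector `T` in Minkowski spacetime `ℝ^{1+n}` is past-directed timelike if and only if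
there is `C > 0` with `η(T,X) ≥ C·‖X‖` for every future-directed causal vector `X`. -/
theorem pastTimelike_iff_uniform_bound {n : ℕ} (hn : 1 ≤ n)
    (T : ℝ × EuclideanSpace ℝ (Fin n)) :
    IsPastTimelike T ↔ ∃ C : ℝ, 0 < C ∧ ∀ X : ℝ × EuclideanSpace ℝ (Fin n),
      IsFutureCausal X → C * euclNorm X ≤ minkowski T X := by
  have hs2 : (0:ℝ) < Real.sqrt 2 := Real.sqrt_pos.2 (by norm_num)
  constructor
  · rintro ⟨⟨hT0, hTT⟩, ht⟩
    have hTT' : -(T.1 * T.1) + ‖T.2‖ ^ 2 < 0 := by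
      have := hTT
      unfold minkowski at this
      rwa [real_inner_self_eq_norm_sq] at this
    have hTnorm : ‖T.2‖ < -T.1 := by nlinarith [norm_nonneg T.2]
    refine ⟨(-T.1 - ‖T.2‖) / Real.sqrt 2, div_pos (by linarith) hs2, ?_⟩
    rintro X ⟨⟨hX0, hXX⟩, hx⟩
    have hXX' : -(X.1 * X.1) + ‖X.2‖ ^ 2 ≤ 0 := by
      have := hXX
      unfold minkowski at this
      rwa [real_inner_self_eq_norm_sq] at this
    have hX' : ‖X.2‖ ≤ X.1 := by nlinarith [norm_nonneg X.2]
    have hEN : euclNorm X ≤ Real.sqrt 2 * X.1 := by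
      unfold euclNorm
      have h1 : X.1 ^ 2 + ‖X.2‖ ^ 2 ≤ 2 * X.1 ^ 2 := by nlinarith [norm_nonneg X.2]
      calc Real.sqrt (X.1 ^ 2 + ‖X.2‖ ^ 2) ≤ Real.sqrt (2 * X.1 ^ 2) :=
            Real.sqrt_le_sqrt h1
        _ = Real.sqrt 2 * X.1 := by
            rw [Real.sqrt_mul (by norm_num), Real.sqrt_sq hx.le]
    have hinner : -(‖T.2‖ * ‖X.2‖) ≤ (inner ℝ T.2 X.2 : ℝ) :=
      neg_le_of_abs_le (abs_real_inner_le_norm T.2 X.2) |>.trans_eq' rfl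
    have hENnn : 0 ≤ euclNorm X := Real.sqrt_nonneg _
    have key : (-T.1 - ‖T.2‖) / Real.sqrt 2 * euclNorm X ≤ (-T.1 - ‖T.2‖) * X.1 := by
      have := mul_le_mul_of_nonneg_left hEN
        (le_of_lt (div_pos (by linarith : (0:ℝ) < -T.1 - ‖T.2‖) hs2))
      calc (-T.1 - ‖T.2‖) / Real.sqrt 2 * euclNorm X
          ≤ (-T.1 - ‖T.2‖) / Real.sqrt 2 * (Real.sqrt 2 * X.1) := this
        _ = (-T.1 - ‖T.2‖) * X.1 := by field_simp
    refine key.trans ?_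
    unfold minkowski
    nlinarith [norm_nonneg T.2, norm_nonneg X.2, mul_le_mul_of_nonneg_left hX' (norm_nonneg T.2)]
  · rintro ⟨C, hC, hbound⟩
    have hfc1 : IsFutureCausal ((1:ℝ), (0 : EuclideanSpace ℝ (Fin n))) := by
      refine ⟨⟨?_, ?_⟩, one_pos⟩
      · intro h
        have := congrArg Prod.fst h
        simp at this
      · simp [minkowski]
    have h1 := hbound _ hfc1
    have hen1 : euclNorm ((1:ℝ), (0 : EuclideanSpace ℝ (Fin n))) = 1 := by
      simp [euclNorm]
    rw [hen1] at h1
    simp [minkowski] at h1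
    -- h1 : C * 1 ≤ -T.1 hopefully
    have ht : T.1 ≤ -C := by linarith [h1]
    have hT1 : T.1 < 0 := by linarith
    have hnormlt : ‖T.2‖ < -T.1 := by
      by_cases h2 : T.2 = 0
      · simp [h2]; linarith
      · set u : EuclideanSpace ℝ (Fin n) := ‖T.2‖⁻¹ • T.2 with hu
        have hnu : ‖u‖ = 1 := by
          rw [hu, norm_smul, norm_inv, norm_norm, inv_mul_cancel₀ (norm_ne_zero_iff.2 h2)]
        have hfc2 : IsFutureCausal ((1:ℝ), -u) := by
          refine ⟨⟨?_, ?_⟩, one_pos⟩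
          · intro h
            have := congrArg Prod.fst h
            simp at this
          · simp only [minkowski]
            rw [real_inner_self_eq_norm_sq, norm_neg, hnu]
            norm_num
        have h2b := hbound _ hfc2
        have hen2 : euclNorm ((1:ℝ), -u) = Real.sqrt 2 := by
          simp [euclNorm, hnu]
          norm_num
        have hinn : (inner ℝ T.2 (-u) : ℝ) = -‖T.2‖ := by
          rw [inner_neg_right, hu, real_inner_smul_right, real_inner_self_eq_norm_sq]
          field_simp [sq]
        rw [hen2] at h2b
        simp only [minkowski, hinn] at h2b
        have : 0 < C * Real.sqrt 2 := mul_pos hC hs2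
        linarith
    refine ⟨⟨?_, ?_⟩, hT1⟩
    · intro h
      have := congrArg Prod.fst h
      simp at this
      linarith
    · unfold minkowski
      rw [real_inner_self_eq_norm_sq]
      nlinarith [norm_nonneg T.2]
end

section
/- Causality property of the null distance in Minkowski spacetime ℝ^{1+n} with the time function τ(v) = v₀: if p ≤ q, then d̂_τ(p, q) = q₀ − p₀. -/
open scoped Classical

/-- The causal relation: `p ≤ q` iff `p = q` or `q − p` is future-directed causal. -/
def causalLE {n : ℕ} (p q : ℝ × EuclideanSpace ℝ (Fin n)) : Prop :=
  p = q ∨ IsFutureCausal (q - p)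

/-- `f`, together with `N ≥ 1`, encodes a piecewise causal path `p = f 0, f 1, …, f N = q`
in which every successive difference is a causal vector. -/
def IsPiecewiseCausalPath {n : ℕ} (f : ℕ → ℝ × EuclideanSpace ℝ (Fin n)) (N : ℕ)
    (p q : ℝ × EuclideanSpace ℝ (Fin n)) : Prop :=
  1 ≤ N ∧ f 0 = p ∧ f N = q ∧ ∀ i < N, IsCausal (f (i + 1) - f i)

/-- The null length of a piecewise causal path, w.r.t. the time function `τ(v) = v₀`:
`∑ |(f(i+1))₀ − (f i)₀|`. -/
noncomputable def nullLength {n : ℕ} (f : ℕ → ℝ × EuclideanSpace ℝ (Fin n)) (N : ℕ) : ℝ :=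
  ∑ i ∈ Finset.range N, |(f (i + 1)).1 - (f i).1|

/-- The null distance w.r.t. the time function `τ(v) = v₀`: the infimum of null lengths of
piecewise causal paths from `p` to `q`, with `d̂(p,p) = 0`. -/
noncomputable def nullDist {n : ℕ} (p q : ℝ × EuclideanSpace ℝ (Fin n)) : ℝ :=
  if _h : p = q then 0
  else sInf {L : ℝ | ∃ (N : ℕ) (f : ℕ → ℝ × EuclideanSpace ℝ (Fin n)),
    IsPiecewiseCausalPath f N p q ∧ L = nullLength f N}

/-- Causality property of the null distance in Minkowski spacetime `ℝ^{1+n}` with the time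
function `τ(v) = v₀`: if `p ≤ q` then `d̂_τ(p,q) = q₀ − p₀`. -/
theorem nullDist_eq_time_diff_of_causalLE {n : ℕ} (hn : 1 ≤ n)
    (p q : ℝ × EuclideanSpace ℝ (Fin n)) (hpq : causalLE p q) :
    nullDist p q = q.1 - p.1 := by
  rcases hpq with rfl | h
  · simp [nullDist]
  · have hne : p ≠ q := by
      rintro rfl
      exact h.1.1 (sub_self p)
    have hpos : 0 < q.1 - p.1 := h.2
    have hmem : (q.1 - p.1) ∈ {L : ℝ | ∃ (N : ℕ) (f : ℕ → ℝ × EuclideanSpace ℝ (Fin n)),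
        IsPiecewiseCausalPath f N p q ∧ L = nullLength f N} := by
      refine ⟨1, fun i => if i = 0 then p else q, ⟨le_refl 1, by simp, by simp, ?_⟩, ?_⟩
      · intro i hi
        interval_cases i
        simpa using h.1
      · simp [nullLength, abs_of_pos hpos]
    have hlb : ∀ L ∈ {L : ℝ | ∃ (N : ℕ) (f : ℕ → ℝ × EuclideanSpace ℝ (Fin n)),
        IsPiecewiseCausalPath f N p q ∧ L = nullLength f N}, q.1 - p.1 ≤ L := by
      rintro L ⟨N, f, ⟨hN, h0, hNq, _⟩, rfl⟩
      have htel : ∑ i ∈ Finset.range N, ((f (i + 1)).1 - (f i).1) = q.1 - p.1 := by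
        rw [Finset.sum_range_sub (fun i => (f i).1), h0, hNq]
      calc q.1 - p.1 = ∑ i ∈ Finset.range N, ((f (i + 1)).1 - (f i).1) := htel.symm
        _ ≤ nullLength f N := Finset.sum_le_sum fun i _ => le_abs_self _
    rw [nullDist, dif_neg hne]
    exact le_antisymm (csInf_le ⟨q.1 - p.1, hlb⟩ hmem) (le_csInf ⟨_, hmem⟩ hlb)
end
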